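/- For every set X: (1) a finite set A of prenex complete Boolean terms over X is derivable in the finitary sequent calculus if and only if it is derivable in the infinitary sequent calculus; and (2) for every set-indexed family (t_i)_{i∈ι} of prenex complete Boolean terms over X, the singleton {⋁_{i∈ι} t_i} is derivable in the infinitary sequent calculus if and only if the set {t_i | i ∈ ι} is derivable in the infinitary sequent calculus. -/
import Mathlib


universe u

/-- Prenex complete Boolean terms over a set `X`: literals `x`, `¬x` for `x ∈ X`, closed under
set-indexed conjunctions and disjunctions. -/
inductive PTerm (X : Type u) : Type (u + 1)
  | var : X → PTerm X
  | nvar : X → PTerm X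
  | conj : {ι : Type u} → (ι → PTerm X) → PTerm X
  | disj : {ι : Type u} → (ι → PTerm X) → PTerm X

/-- The finitary one-sided sequent calculus, deriving (finite) sets of prenex terms. -/
inductive FDer {X : Type u} : Set (PTerm X) → Prop
  | id {A : Set (PTerm X)} (x : X) : PTerm.var x ∈ A → PTerm.nvar x ∈ A → FDer A
  | conj {A : Set (PTerm X)} {ι : Type u} (t : ι → PTerm X) :
      PTerm.conj t ∈ A → (∀ i : ι, FDer (insert (t i) A)) → FDer A
  | disj {A : Set (PTerm X)} {ι : Type u} (t : ι → PTerm X) (i : ι) :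
      PTerm.disj t ∈ A → FDer (insert (t i) A) → FDer A

/-- The infinitary one-sided sequent calculus, deriving arbitrary sets of prenex terms. -/
inductive IDer {X : Type u} : Set (PTerm X) → Prop
  | id {A : Set (PTerm X)} (x : X) : PTerm.var x ∈ A → PTerm.nvar x ∈ A → IDer A
  | conj {A : Set (PTerm X)} {ι : Type u} (t : ι → PTerm X) :
      PTerm.conj t ∈ A → (∀ i : ι, IDer (insert (t i) A)) → IDer A
  | disj {A : Set (PTerm X)} {ι : Type u} (t : ι → PTerm X) :
      PTerm.disj t ∈ A → IDer (A ∪ Set.range t) → IDer A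

lemma IDer.weaken {X : Type u} {A B : Set (PTerm X)} (h : IDer A) (hAB : A ⊆ B) : IDer B := by
  induction h generalizing B with
  | id x hv hn => exact IDer.id x (hAB hv) (hAB hn)
  | conj t ht _ ih =>
      exact IDer.conj t (hAB ht) fun i => ih i (Set.insert_subset_insert hAB)
  | disj t ht _ ih =>
      exact IDer.disj t (hAB ht) (ih (Set.union_subset_union_left _ hAB))

lemma FDer.weaken {X : Type u} {A B : Set (PTerm X)} (h : FDer A) (hAB : A ⊆ B) : FDer B := by
  induction h generalizing B with
  | id x hv hn => exact FDer.id x (hAB hv) (hAB hn)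
  | conj t ht _ ih =>
      exact FDer.conj t (hAB ht) fun i => ih i (Set.insert_subset_insert hAB)
  | disj t i ht _ ih =>
      exact FDer.disj t i (hAB ht) (ih (Set.insert_subset_insert hAB))

lemma FDer.toIDer {X : Type u} {A : Set (PTerm X)} (h : FDer A) : IDer A := by
  induction h with
  | id x hv hn => exact IDer.id x hv hn
  | conj t ht _ ih => exact IDer.conj t ht ih
  | disj t i ht _ ih =>
      refine IDer.disj t ht (ih.weaken ?_)
      exact Set.insert_subset (Or.inr ⟨i, rfl⟩) Set.subset_union_left

/-- Disjunctive closure of `A`: elements of `A` together with disjuncts of disjunctions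
(recursively). -/
inductive Dcl {X : Type u} (A : Set (PTerm X)) : PTerm X → Prop
  | base {a : PTerm X} : a ∈ A → Dcl A a
  | step {ι : Type u} {t : ι → PTerm X} (i : ι) : Dcl A (PTerm.disj t) → Dcl A (t i)

lemma Dcl.mono {X : Type u} {A B : Set (PTerm X)} (hAB : A ⊆ B) {a : PTerm X}
    (h : Dcl A a) : Dcl B a := by
  induction h with
  | base ha => exact Dcl.base (hAB ha)
  | step i _ ih => exact Dcl.step i ih

/-- Unfolding: a derivation of `insert b A` with `b` in the disjunctive closure of `A`
yields a derivation of `A` by repeated applications of the disjunction rule. -/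
lemma Dcl.unfold {X : Type u} {A : Set (PTerm X)} {b : PTerm X}
    (hb : Dcl A b) (h : FDer (insert b A)) : FDer A := by
  induction hb with
  | base ha => rwa [Set.insert_eq_self.mpr ha] at h
  | step i hd ih =>
      refine ih (FDer.disj _ i (Set.mem_insert _ _) ?_)
      exact h.weaken (Set.insert_subset_insert (Set.subset_insert _ _))

/-- Key lemma: any infinitary derivation of `B` can be turned into a finitary derivation
of any `A` whose disjunctive closure contains `B`. -/
lemma IDer.toFDer_aux {X : Type u} {B : Set (PTerm X)} (h : IDer B) :
    ∀ A : Set (PTerm X), B ⊆ Dcl A → FDer A := by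
  induction h with
  | @id B x hv hn =>
      intro A hBA
      refine Dcl.unfold (hBA hn) ?_
      refine Dcl.unfold ((hBA hv).mono (Set.subset_insert _ _)) ?_
      exact FDer.id x (Set.mem_insert _ _) (Set.mem_insert_of_mem _ (Set.mem_insert _ _))
  | @conj B ι t ht _ ih =>
      intro A hBA
      refine Dcl.unfold (hBA ht) ?_
      refine FDer.conj t (Set.mem_insert _ _) fun i => ?_
      refine ih i _ (Set.insert_subset (Dcl.base (Set.mem_insert _ _)) ?_)
      exact fun b hb => ((hBA hb).mono (Set.subset_insert _ _)).mono (Set.subset_insert _ _)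
  | @disj B ι t ht _ ih =>
      intro A hBA
      refine ih _ (Set.union_subset hBA ?_)
      rintro _ ⟨i, rfl⟩
      exact Dcl.step i (hBA ht)

/-- Disjunction inversion: replace `⋁ t` by all of its disjuncts. -/
lemma IDer.replace {X : Type u} {ι : Type u} {t : ι → PTerm X} {B : Set (PTerm X)}
    (h : IDer B) : IDer ((B \ {PTerm.disj t}) ∪ Set.range t) := by
  induction h with
  | id x hv hn =>
      exact IDer.id x (Or.inl ⟨hv, by simp⟩) (Or.inl ⟨hn, by simp⟩)
  | @conj B κ s hs _ ih =>
      refine IDer.conj s (Or.inl ⟨hs, by simp⟩) fun i => ?_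
      refine (ih i).weaken ?_
      rintro b (⟨hb, hbne⟩ | hb)
      · rcases hb with rfl | hb
        · exact Set.mem_insert _ _
        · exact Set.mem_insert_of_mem _ (Or.inl ⟨hb, hbne⟩)
      · exact Set.mem_insert_of_mem _ (Or.inr hb)
  | @disj B κ s hs _ ih =>
      by_cases hst : PTerm.disj s = PTerm.disj t
      · have hr : Set.range s = Set.range t := by
          injection hst with h1 h2
          subst h1
          rw [eq_of_heq h2]
        refine ih.weaken ?_
        rintro b (⟨(hb | hb), hbne⟩ | hb)
        · exact Or.inl ⟨hb, hbne⟩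
        · exact Or.inr (hr ▸ hb)
        · exact Or.inr hb
      · refine IDer.disj s (Or.inl ⟨hs, hst⟩) (ih.weaken ?_)
        rintro b (⟨(hb | hb), hbne⟩ | hb)
        · exact Or.inl (Or.inl ⟨hb, hbne⟩)
        · exact Or.inr hb
        · exact Or.inl (Or.inr hb)

/-- (1) For finite sets of terms, the finitary and infinitary sequent calculi derive the same
sets; (2) a singleton `{⋁ᵢ tᵢ}` is derivable in the infinitary calculus iff `{tᵢ | i}` is. -/
theorem stmt_19 {X : Type u} :
    (∀ A : Set (PTerm X), A.Finite → (FDer A ↔ IDer A)) ∧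
    (∀ (ι : Type u) (t : ι → PTerm X), IDer {PTerm.disj t} ↔ IDer (Set.range t)) := by
  constructor
  · intro A _
    exact ⟨FDer.toIDer, fun h => h.toFDer_aux A (fun b hb => Dcl.base hb)⟩
  · intro ι t
    constructor
    · intro h
      have := h.replace (t := t)
      have hs : ({PTerm.disj t} \ {PTerm.disj t} : Set (PTerm X)) ∪ Set.range t
          = Set.range t := by simp
      rwa [hs] at this
    · intro h
      refine IDer.disj t rfl (h.weaken Set.subset_union_right)
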